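/- Let D ⊆ ℝ² be open and f : D → ℝ³ a regular C^{1M} immersion with ‖f_x‖ ≡ 1 and ‖f_y‖ ≡ 1. Let θ : D → (0,π) be continuous with cos θ = ⟨f_x, f_y⟩, and set N := (f_x × f_y)/sin θ. Assume N is C¹ and that ⟨f_x, N_x⟩ = 0, ⟨f_y, N_y⟩ = 0, and f_xy = (sin θ)·N on D (asymptotic Chebyshev coordinates with K = −1). Then on D: ⟨f_x, N_y⟩ = −sin θ and ⟨f_y, N_x⟩ = −sin θ; f_x = N × N_x and f_y = −N × N_y; ‖N_x‖ ≡ 1, ‖N_y‖ ≡ 1, and ⟨N_x, N_y⟩ = −cos θ. -/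

import Mathlib

noncomputable section

open Real Set

abbrev E3 : Type := EuclideanSpace ℝ (Fin 3)

/-- Partial derivative in the `x`-direction. -/
noncomputable def pdx {E : Type*} [NormedAddCommGroup E] [NormedSpace ℝ E]
    (f : ℝ × ℝ → E) (p : ℝ × ℝ) : E := lineDeriv ℝ f p ((1 : ℝ), (0 : ℝ))

/-- Partial derivative in the `y`-direction. -/
noncomputable def pdy {E : Type*} [NormedAddCommGroup E] [NormedSpace ℝ E]
    (f : ℝ × ℝ → E) (p : ℝ × ℝ) : E := lineDeriv ℝ f p ((0 : ℝ), (1 : ℝ))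

/-- `f` is C¹ on `D`, and the mixed second partials `∂y∂x f` and `∂x∂y f`
exist at every point of `D`, are continuous on `D`, and agree on `D`. -/
def C1M {E : Type*} [NormedAddCommGroup E] [NormedSpace ℝ E]
    (D : Set (ℝ × ℝ)) (f : ℝ × ℝ → E) : Prop :=
  ContDiffOn ℝ 1 f D ∧
  (∀ p ∈ D, LineDifferentiableAt ℝ (pdx f) p ((0 : ℝ), (1 : ℝ))) ∧
  (∀ p ∈ D, LineDifferentiableAt ℝ (pdy f) p ((1 : ℝ), (0 : ℝ))) ∧
  ContinuousOn (pdy (pdx f)) D ∧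
  ContinuousOn (pdx (pdy f)) D ∧
  (∀ p ∈ D, pdy (pdx f) p = pdx (pdy f) p)

/-- The cross product on ℝ³. -/
noncomputable def cross3 (a b : E3) : E3 :=
  (WithLp.equiv 2 (Fin 3 → ℝ)).symm
    ![a 1 * b 2 - a 2 * b 1, a 2 * b 0 - a 0 * b 2, a 0 * b 1 - a 1 * b 0]

/-- The Euclidean inner product on ℝ³. -/
noncomputable def dot (a b : E3) : ℝ := inner ℝ a b

/-- `N : D → S²` is weakly harmonic: it is C^{1M}, weakly regular, takes values in the
unit sphere, and `N_xy = N_yx = h • N` for some scalar function `h`. -/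
def WeakHarmonic (D : Set (ℝ × ℝ)) (N : ℝ × ℝ → E3) : Prop :=
  C1M D N ∧ (∀ p ∈ D, ‖N p‖ = 1) ∧
  (∀ p ∈ D, pdx N p ≠ 0 ∧ pdy N p ≠ 0) ∧
  ∃ h : ℝ × ℝ → ℝ, ∀ p ∈ D, pdy (pdx N) p = h p • N p ∧ pdx (pdy N) p = h p • N p

/-- A weakly-regular C^{1M} ps-front with associated weakly harmonic map `N`. -/
def PsFront (D : Set (ℝ × ℝ)) (f N : ℝ × ℝ → E3) : Prop :=
  C1M D f ∧ (∀ p ∈ D, pdx f p ≠ 0 ∧ pdy f p ≠ 0) ∧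
  WeakHarmonic D N ∧
  ∀ p ∈ D, pdx f p = cross3 (N p) (pdx N p) ∧ pdy f p = -cross3 (N p) (pdy N p)


lemma dot_expand (a b : E3) : dot a b = a 0 * b 0 + a 1 * b 1 + a 2 * b 2 := by
  simp [dot, PiLp.inner_apply, Fin.sum_univ_three, RCLike.inner_apply]; ring

lemma cross3_apply (a b : E3) (i : Fin 3) :
    cross3 a b i = ![a 1 * b 2 - a 2 * b 1, a 2 * b 0 - a 0 * b 2, a 0 * b 1 - a 1 * b 0] i := by
  simp [cross3]

lemma smul_apply' (r : ℝ) (a : E3) (i : Fin 3) : (r • a) i = r * a i := rfl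
lemma neg_apply' (a : E3) (i : Fin 3) : (-a) i = -(a i) := rfl
lemma sub_apply' (a b : E3) (i : Fin 3) : (a - b) i = a i - b i := rfl
lemma add_apply' (a b : E3) (i : Fin 3) : (a + b) i = a i + b i := rfl

lemma e3_ext (a b : E3) (h : ∀ i, a i = b i) : a = b := PiLp.ext h

-- cross properties
lemma dot_cross_left (a b : E3) : dot (cross3 a b) a = 0 := by
  rw [dot_expand]; simp only [cross3_apply]
  simp [Fin.isValue]; ring

lemma dot_cross_right (a b : E3) : dot (cross3 a b) b = 0 := by
  rw [dot_expand]; simp only [cross3_apply]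
  simp [Fin.isValue]; ring

lemma lagrange (a b : E3) : dot (cross3 a b) (cross3 a b) = dot a a * dot b b - dot a b ^ 2 := by
  simp only [dot_expand, cross3_apply]
  simp [Fin.isValue]; ring

lemma triple (a b v : E3) : cross3 (cross3 a b) v = dot a v • b - dot b v • a := by
  apply e3_ext; intro i
  simp only [sub_apply', smul_apply', dot_expand, cross3_apply]
  fin_cases i <;> simp <;> ring

lemma cross3_smul_left (r : ℝ) (a b : E3) : cross3 (r • a) b = r • cross3 a b := by
  apply e3_ext; intro i
  simp only [smul_apply', cross3_apply]
  fin_cases i <;> simp <;> ring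

lemma cross3_smul_right (r : ℝ) (a b : E3) : cross3 a (r • b) = r • cross3 a b := by
  apply e3_ext; intro i
  simp only [smul_apply', cross3_apply]
  fin_cases i <;> simp <;> ring

lemma cross3_sub_right (a b c : E3) : cross3 a (b - c) = cross3 a b - cross3 a c := by
  apply e3_ext; intro i
  simp only [sub_apply', cross3_apply]
  fin_cases i <;> simp <;> ring

lemma dot_comm (a b : E3) : dot a b = dot b a := real_inner_comm b a
lemma dot_smul_left (r : ℝ) (a b : E3) : dot (r • a) b = r * dot a b := real_inner_smul_left a b r
lemma dot_smul_right (r : ℝ) (a b : E3) : dot a (r • b) = r * dot a b := real_inner_smul_right a b r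
lemma dot_sub_left (a b c : E3) : dot (a - b) c = dot a c - dot b c := inner_sub_left a b c
lemma dot_sub_right (a b c : E3) : dot a (b - c) = dot a b - dot a c := inner_sub_right a b c

lemma ortho3 (a b w : E3) (hab : dot (cross3 a b) (cross3 a b) ≠ 0)
    (h1 : dot a w = 0) (h2 : dot b w = 0) (h3 : dot (cross3 a b) w = 0) : w = 0 := by
  have hz : cross3 (cross3 a b) w = 0 := by
    rw [triple, h1, h2]; simp
  have hl := lagrange (cross3 a b) w
  rw [hz] at hl
  have : dot (0 : E3) (0 : E3) = 0 := by simp [dot]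
  rw [this] at hl
  rw [h3] at hl
  have hw : dot w w = 0 := by
    have h0 : dot (cross3 a b) (cross3 a b) * dot w w = 0 := by linarith
    rcases mul_eq_zero.mp h0 with h | h
    · exact absurd h hab
    · exact h
  have : (inner ℝ w w : ℝ) = 0 := hw
  exact inner_self_eq_zero.mp this
set_option maxHeartbeats 1000000 in
lemma main_alg (a b n nx ny : E3) (c s : ℝ) (hs : 0 < s) (hsc : s^2 + c^2 = 1)
    (haa : dot a a = 1) (hbb : dot b b = 1) (hab : dot a b = c)
    (hn : n = s⁻¹ • cross3 a b)
    (hanx : dot a nx = 0) (hbny : dot b ny = 0)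
    (hany : dot a ny = -s) (hbnx : dot b nx = -s)
    (hnnx : dot n nx = 0) (hnny : dot n ny = 0) :
    a = cross3 n nx ∧ b = -cross3 n ny ∧ dot nx nx = 1 ∧ dot ny ny = 1 ∧ dot nx ny = -c := by
  have hsne : s ≠ 0 := ne_of_gt hs
  have hba : dot b a = c := by rw [dot_comm]; exact hab
  have hcc : dot (cross3 a b) (cross3 a b) = s^2 := by
    rw [lagrange, haa, hbb, hab]; nlinarith
  have hcne : dot (cross3 a b) (cross3 a b) ≠ 0 := by rw [hcc]; positivity
  have hca : dot (cross3 a b) a = 0 := dot_cross_left a b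
  have hcb : dot (cross3 a b) b = 0 := dot_cross_right a b
  have hcnx : dot (cross3 a b) nx = 0 := by
    have h : dot n nx = s⁻¹ * dot (cross3 a b) nx := by rw [hn, dot_smul_left]
    rw [hnnx] at h
    field_simp at h
    linarith
  have hcny : dot (cross3 a b) ny = 0 := by
    have h : dot n ny = s⁻¹ * dot (cross3 a b) ny := by rw [hn, dot_smul_left]
    rw [hnny] at h
    field_simp at h
    linarith
  have hnx : nx = s⁻¹ • ((c • a) - b) := by
    rw [← sub_eq_zero]
    apply ortho3 a b _ hcne
    · rw [dot_sub_right, dot_smul_right, dot_sub_right, dot_smul_right, hanx, haa, hab]; ring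
    · rw [dot_sub_right, dot_smul_right, dot_sub_right, dot_smul_right, hbnx, hba, hbb]
      field_simp; nlinarith
    · rw [dot_sub_right, dot_smul_right, dot_sub_right, dot_smul_right, hcnx, hca, hcb]; ring
  have hny : ny = s⁻¹ • ((c • b) - a) := by
    rw [← sub_eq_zero]
    apply ortho3 a b _ hcne
    · rw [dot_sub_right, dot_smul_right, dot_sub_right, dot_smul_right, hany, hab, haa]
      field_simp; nlinarith
    · rw [dot_sub_right, dot_smul_right, dot_sub_right, dot_smul_right, hbny, hbb, hba]; ring
    · rw [dot_sub_right, dot_smul_right, dot_sub_right, dot_smul_right, hcny, hcb, hca]; ring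
  refine ⟨?_, ?_, ?_, ?_, ?_⟩
  · rw [hn, hnx, cross3_smul_left, cross3_smul_right, cross3_sub_right, cross3_smul_right,
      triple, triple, haa, hba, hab, hbb]
    match_scalars <;> field_simp <;> nlinarith
  · rw [hn, hny, cross3_smul_left, cross3_smul_right, cross3_sub_right, cross3_smul_right,
      triple, triple, haa, hba, hab, hbb]
    match_scalars <;> field_simp <;> nlinarith
  · rw [hnx, dot_smul_left, dot_smul_right, dot_sub_left, dot_sub_right, dot_sub_right,
      dot_smul_left, dot_smul_right, dot_smul_right, dot_smul_left, haa, hab, hba, hbb]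
    field_simp; nlinarith
  · rw [hny, dot_smul_left, dot_smul_right, dot_sub_left, dot_sub_right, dot_sub_right,
      dot_smul_left, dot_smul_right, dot_smul_right, dot_smul_left, haa, hab, hba, hbb]
    field_simp; nlinarith
  · rw [hnx, hny, dot_smul_left, dot_smul_right, dot_sub_left, dot_sub_right, dot_sub_right,
      dot_smul_left, dot_smul_right, dot_smul_right, dot_smul_left, haa, hab, hba, hbb]
    field_simp; linear_combination c * hsc

lemma affine_diff (p v : ℝ × ℝ) : DifferentiableAt ℝ (fun t : ℝ => p + t • v) 0 :=
  (differentiableAt_const p).add ((differentiableAt_id).smul_const v)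

lemma lineDiff_of_diffAt {g : ℝ × ℝ → E3} {p : ℝ × ℝ} (h : DifferentiableAt ℝ g p)
    (v : ℝ × ℝ) : LineDifferentiableAt ℝ g p v := by
  have : DifferentiableAt ℝ (fun t : ℝ => g (p + t • v)) 0 := by
    have h' : DifferentiableAt ℝ g ((fun t : ℝ => p + t • v) 0) := by simpa using h
    exact h'.comp 0 (affine_diff p v)
  exact this

lemma lineDeriv_dot_const {D : Set (ℝ × ℝ)} (hD : IsOpen D) {p : ℝ × ℝ} (hp : p ∈ D)
    (g₁ g₂ : ℝ × ℝ → E3) (v : ℝ × ℝ) (c : ℝ)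
    (h₁ : LineDifferentiableAt ℝ g₁ p v) (h₂ : LineDifferentiableAt ℝ g₂ p v)
    (hc : ∀ q ∈ D, dot (g₁ q) (g₂ q) = c) :
    dot (lineDeriv ℝ g₁ p v) (g₂ p) + dot (g₁ p) (lineDeriv ℝ g₂ p v) = 0 := by
  have hd1 : HasDerivAt (fun t : ℝ => g₁ (p + t • v)) (lineDeriv ℝ g₁ p v) 0 :=
    h₁.hasDerivAt
  have hd2 : HasDerivAt (fun t : ℝ => g₂ (p + t • v)) (lineDeriv ℝ g₂ p v) 0 :=
    h₂.hasDerivAt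
  have key : HasDerivAt (fun t : ℝ => (inner ℝ (g₁ (p + t • v)) (g₂ (p + t • v)) : ℝ))
      ((inner ℝ (g₁ (p + (0:ℝ) • v)) (lineDeriv ℝ g₂ p v) : ℝ)
        + (inner ℝ (lineDeriv ℝ g₁ p v) (g₂ (p + (0:ℝ) • v)) : ℝ)) 0 :=
    hd1.inner ℝ hd2
  have hmem : ∀ᶠ t : ℝ in nhds 0, p + t • v ∈ D := by
    have hcont : ContinuousAt (fun t : ℝ => p + t • v) 0 :=
      (affine_diff p v).continuousAt
    have h0 : (fun t : ℝ => p + t • v) 0 ∈ D := by simpa using hp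
    exact hcont.eventually_mem (hD.mem_nhds h0)
  have heq : (fun t : ℝ => (inner ℝ (g₁ (p + t • v)) (g₂ (p + t • v)) : ℝ))
      =ᶠ[nhds (0:ℝ)] fun _ => c := by
    filter_upwards [hmem] with t ht using hc _ ht
  have hzero : HasDerivAt (fun t : ℝ => (inner ℝ (g₁ (p + t • v)) (g₂ (p + t • v)) : ℝ)) 0 0 :=
    (hasDerivAt_const (0:ℝ) c).congr_of_eventuallyEq heq
  have := key.unique hzero
  simp only [zero_smul, add_zero] at this
  unfold dot
  linarith [this]

set_option maxHeartbeats 1000000 in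
/-- For a regular C^{1M} immersion in asymptotic Chebyshev coordinates with `K = −1`
(`‖f_x‖ = ‖f_y‖ = 1`, `cos θ = ⟨f_x,f_y⟩` with `0 < θ < π`, `N = (f_x × f_y)/sin θ` C¹,
`⟨f_x,N_x⟩ = ⟨f_y,N_y⟩ = 0`, `f_xy = (sin θ) • N`):
`⟨f_x,N_y⟩ = ⟨f_y,N_x⟩ = −sin θ`, `f_x = N × N_x`, `f_y = −N × N_y`,
`‖N_x‖ = ‖N_y‖ = 1`, and `⟨N_x,N_y⟩ = −cos θ` on `D`. -/
theorem stmt_11 (D : Set (ℝ × ℝ)) (hD : IsOpen D)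
    (f N : ℝ × ℝ → E3) (θ : ℝ × ℝ → ℝ)
    (hf : C1M D f)
    (hreg : ∀ p ∈ D, LinearIndependent ℝ ![pdx f p, pdy f p])
    (hE : ∀ p ∈ D, ‖pdx f p‖ = 1) (hG : ∀ p ∈ D, ‖pdy f p‖ = 1)
    (hθc : ContinuousOn θ D) (hθr : ∀ p ∈ D, θ p ∈ Set.Ioo 0 π)
    (hcos : ∀ p ∈ D, Real.cos (θ p) = dot (pdx f p) (pdy f p))
    (hNdef : ∀ p ∈ D, N p = (Real.sin (θ p))⁻¹ • cross3 (pdx f p) (pdy f p))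
    (hN : ContDiffOn ℝ 1 N D)
    (hasx : ∀ p ∈ D, dot (pdx f p) (pdx N p) = 0)
    (hasy : ∀ p ∈ D, dot (pdy f p) (pdy N p) = 0)
    (hfxy : ∀ p ∈ D, pdy (pdx f) p = Real.sin (θ p) • N p) :
    ∀ p ∈ D,
      dot (pdx f p) (pdy N p) = -Real.sin (θ p) ∧
      dot (pdy f p) (pdx N p) = -Real.sin (θ p) ∧
      pdx f p = cross3 (N p) (pdx N p) ∧
      pdy f p = -cross3 (N p) (pdy N p) ∧
      ‖pdx N p‖ = 1 ∧ ‖pdy N p‖ = 1 ∧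
      dot (pdx N p) (pdy N p) = -Real.cos (θ p) := by
  intro p hp
  -- abbreviations
  set a := pdx f p with ha
  set b := pdy f p with hb
  have hθp := hθr p hp
  have hs : 0 < Real.sin (θ p) := Real.sin_pos_of_pos_of_lt_pi hθp.1 hθp.2
  have hsne : Real.sin (θ p) ≠ 0 := ne_of_gt hs
  have hsc : Real.sin (θ p) ^ 2 + Real.cos (θ p) ^ 2 = 1 := Real.sin_sq_add_cos_sq (θ p)
  have dot_self_norm : ∀ (w : E3), dot w w = ‖w‖ * ‖w‖ := fun w =>
    real_inner_self_eq_norm_mul_norm w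
  have haa : dot a a = 1 := by rw [dot_self_norm, hE p hp]; ring
  have hbb : dot b b = 1 := by rw [dot_self_norm, hG p hp]; ring
  have hab : dot a b = Real.cos (θ p) := (hcos p hp).symm
  -- orthogonality of N with f_x, f_y on D, and unit norm of N on D
  have hsq : ∀ q ∈ D, 0 < Real.sin (θ q) := fun q hq =>
    Real.sin_pos_of_pos_of_lt_pi (hθr q hq).1 (hθr q hq).2
  have hNfx : ∀ q ∈ D, dot (pdx f q) (N q) = 0 := by
    intro q hq
    rw [hNdef q hq, dot_smul_right, dot_comm, dot_cross_left, mul_zero]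
  have hNfy : ∀ q ∈ D, dot (pdy f q) (N q) = 0 := by
    intro q hq
    rw [hNdef q hq, dot_smul_right, dot_comm, dot_cross_right, mul_zero]
  have hNN : ∀ q ∈ D, dot (N q) (N q) = 1 := by
    intro q hq
    have haq : dot (pdx f q) (pdx f q) = 1 := by rw [dot_self_norm, hE q hq]; ring
    have hbq : dot (pdy f q) (pdy f q) = 1 := by rw [dot_self_norm, hG q hq]; ring
    have habq : dot (pdx f q) (pdy f q) = Real.cos (θ q) := (hcos q hq).symm
    have hsq' := hsq q hq
    have hscq := Real.sin_sq_add_cos_sq (θ q)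
    rw [hNdef q hq, dot_smul_left, dot_smul_right, lagrange, haq, hbq, habq]
    field_simp
    nlinarith
  -- line differentiability of N
  have hNdiff : DifferentiableAt ℝ N p :=
    ((hN.differentiableOn one_ne_zero) p hp).differentiableAt (hD.mem_nhds hp)
  have hLN : ∀ v : ℝ × ℝ, LineDifferentiableAt ℝ N p v := fun v =>
    lineDiff_of_diffAt hNdiff v
  -- derivative identity 1 : d/dy ⟨f_x, N⟩ = 0
  have key1 := lineDeriv_dot_const hD hp (pdx f) N ((0:ℝ),(1:ℝ)) 0
    (hf.2.1 p hp) (hLN _) hNfx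
  have e1 : lineDeriv ℝ (pdx f) p ((0:ℝ),(1:ℝ)) = pdy (pdx f) p := rfl
  have e2 : lineDeriv ℝ N p ((0:ℝ),(1:ℝ)) = pdy N p := rfl
  rw [e1, e2, hfxy p hp, dot_smul_left, hNN p hp, mul_one] at key1
  have hany : dot a (pdy N p) = -Real.sin (θ p) := by linarith
  -- derivative identity 2 : d/dx ⟨f_y, N⟩ = 0
  have key2 := lineDeriv_dot_const hD hp (pdy f) N ((1:ℝ),(0:ℝ)) 0
    (hf.2.2.1 p hp) (hLN _) hNfy
  have e3 : lineDeriv ℝ (pdy f) p ((1:ℝ),(0:ℝ)) = pdx (pdy f) p := rfl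
  have e4 : lineDeriv ℝ N p ((1:ℝ),(0:ℝ)) = pdx N p := rfl
  rw [e3, e4, ← hf.2.2.2.2.2 p hp, hfxy p hp, dot_smul_left, hNN p hp, mul_one] at key2
  have hbnx : dot b (pdx N p) = -Real.sin (θ p) := by linarith
  -- derivative identity 3 : d/dx ⟨N, N⟩ = 0 and d/dy ⟨N, N⟩ = 0
  have key3 := lineDeriv_dot_const hD hp N N ((1:ℝ),(0:ℝ)) 1 (hLN _) (hLN _) hNN
  rw [e4] at key3
  have hnnx : dot (N p) (pdx N p) = 0 := by
    rw [dot_comm] at key3; linarith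
  have key4 := lineDeriv_dot_const hD hp N N ((0:ℝ),(1:ℝ)) 1 (hLN _) (hLN _) hNN
  rw [e2] at key4
  have hnny : dot (N p) (pdy N p) = 0 := by
    rw [dot_comm] at key4; linarith
  -- conclude via the algebraic lemma
  obtain ⟨c1, c2, c3, c4, c5⟩ := main_alg a b (N p) (pdx N p) (pdy N p)
    (Real.cos (θ p)) (Real.sin (θ p)) hs hsc haa hbb hab (hNdef p hp)
    (hasx p hp) (hasy p hp) hany hbnx hnnx hnny
  refine ⟨hany, hbnx, c1, c2, ?_, ?_, c5⟩
  · have h3 : ‖pdx N p‖ * ‖pdx N p‖ = 1 := by rw [← dot_self_norm]; exact c3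
    rcases mul_self_eq_one_iff.mp h3 with h | h
    · exact h
    · nlinarith [norm_nonneg (pdx N p)]
  · have h4 : ‖pdy N p‖ * ‖pdy N p‖ = 1 := by rw [← dot_self_norm]; exact c4
    rcases mul_self_eq_one_iff.mp h4 with h | h
    · exact h
    · nlinarith [norm_nonneg (pdy N p)]


end
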